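/- A signed graph is balanced if and only if its vertex set can be partitioned into two (possibly empty) sets such that every negative edge joins vertices in different sets and every positive edge joins vertices in the same set. -/

import Mathlib

open SimpleGraph

/-- The sign of a walk: the product of the signs of its consecutive edges, where
`σ u v = true` means the edge `uv` is positive and `σ u v = false` means it is negative. -/
def walkSign {V : Type*} {G : SimpleGraph V} (σ : V → V → Bool) {u v : V}
    (w : G.Walk u v) : ℤ :=
  ((w.support.zip w.support.tail).map (fun p => if σ p.1 p.2 then (1 : ℤ) else -1)).prod

/-- A signed graph is balanced if every cycle has positive sign. -/
def IsBalanced {V : Type*} (G : SimpleGraph V) (σ : V → V → Bool) : Prop :=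
  ∀ (u : V) (w : G.Walk u u), w.IsCycle → walkSign σ w = 1

section aux
variable {V : Type*} {G : SimpleGraph V} (σ : V → V → Bool)

theorem walkSign_nil {u : V} : walkSign σ (SimpleGraph.Walk.nil : G.Walk u u) = 1 := rfl

theorem walkSign_cons {u v c : V} (h : G.Adj u v) (w : G.Walk v c) :
    walkSign σ (Walk.cons h w) = (if σ u v then (1:ℤ) else -1) * walkSign σ w := by
  unfold walkSign
  rw [Walk.support_cons, List.tail_cons, Walk.support_eq_cons w]
  simp only [List.zip_cons_cons, List.map_cons, List.prod_cons, List.tail_cons]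

theorem walkSign_append {u v c : V} (p : G.Walk u v) (q : G.Walk v c) :
    walkSign σ (p.append q) = walkSign σ p * walkSign σ q := by
  induction p with
  | nil => simp [walkSign_nil]
  | cons h p ih => simp [Walk.cons_append, walkSign_cons, ih, mul_assoc]

theorem walkSign_eq_or {u v : V} (w : G.Walk u v) :
    walkSign σ w = 1 ∨ walkSign σ w = -1 := by
  induction w with
  | nil => exact Or.inl (walkSign_nil σ)
  | cons h p ih =>
    rw [walkSign_cons]
    rcases ih with h1 | h1 <;> rw [h1] <;> split <;> simp

theorem walkSign_reverse (hσ : ∀ u v, σ u v = σ v u) {u v : V} (w : G.Walk u v) :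
    walkSign σ w.reverse = walkSign σ w := by
  induction w with
  | nil => rfl
  | cons h p ih =>
    rw [Walk.reverse_cons, walkSign_append, ih, walkSign_cons]
    rw [walkSign_cons, walkSign_nil, hσ _ _]
    ring

theorem walkSign_cons_of_edge_mem (hσ : ∀ u v, σ u v = σ v u) {u v : V} (h : G.Adj u v)
    (p : G.Walk v u) (hnd : p.support.Nodup) (he : s(u, v) ∈ p.edges) :
    walkSign σ (Walk.cons h p) = 1 := by
  cases p with
  | nil => simp at he
  | cons h2 p2 =>
    rename_i y
    -- h2 : G.Adj v y, p2 : G.Walk y u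
    rw [Walk.edges_cons, List.mem_cons] at he
    rw [Walk.support_cons, List.nodup_cons] at hnd
    rcases he with he | he
    · -- s(u,v) = s(v,y)
      have hy : y = u := by
        rcases Sym2.eq_iff.mp he.symm with ⟨h1, h2⟩ | ⟨h1, h2⟩
        · exact absurd h1.symm h.ne
        · exact h2
      subst hy
      cases p2 with
      | nil =>
        rw [walkSign_cons, walkSign_cons, walkSign_nil, hσ v y]
        split <;> ring
      | cons h3 p3 =>
        exfalso
        have hnd2 := hnd.2
        rw [Walk.support_cons, List.nodup_cons] at hnd2
        exact hnd2.1 (Walk.end_mem_support p3)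
    · exact absurd (Walk.snd_mem_support_of_mem_edges p2 he) hnd.1

/-- split a walk with a repeated vertex -/
theorem walkSign_split {v u : V} (w : G.Walk v u) (hnd : ¬ w.support.Nodup) :
    ∃ (x : V) (p : G.Walk v x) (l : G.Walk x x) (r : G.Walk x u),
      walkSign σ w = walkSign σ p * walkSign σ l * walkSign σ r ∧
      w.length = p.length + l.length + r.length ∧ 0 < l.length := by
  classical
  obtain ⟨x, hdup⟩ := List.exists_duplicate_iff_not_nodup.mpr hnd
  have hx : x ∈ w.support := hdup.mem
  have hcount : 2 ≤ w.support.count x := List.duplicate_iff_two_le_count.mp hdup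
  have hspec := w.take_spec hx
  have hxq : x ∈ (w.dropUntil x hx).support.tail := by
    have hsupp : w.support = (w.takeUntil x hx).support ++ (w.dropUntil x hx).support.tail := by
      conv_lhs => rw [← hspec]
      exact Walk.support_append _ _
    have h1 : (w.takeUntil x hx).support.count x = 1 :=
      w.count_support_takeUntil_eq_one hx
    rw [hsupp, List.count_append, h1] at hcount
    have : 0 < (w.dropUntil x hx).support.tail.count x := by omega
    exact List.count_pos_iff.mp this
  cases hq2 : w.dropUntil x hx with
  | nil => rw [hq2] at hxq; simp at hxq
  | cons h2 q2 =>
    rename_i y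
    -- h2 : G.Adj x y, q2 : G.Walk y u
    rw [hq2, Walk.support_cons, List.tail_cons] at hxq
    have hxq2 : x ∈ q2.support := hxq
    refine ⟨x, w.takeUntil x hx, Walk.cons h2 (q2.takeUntil x hxq2),
      q2.dropUntil x hxq2, ?_, ?_, ?_⟩
    · conv_lhs => rw [← hspec]
      rw [walkSign_append, hq2, walkSign_cons]
      conv_lhs => rw [← q2.take_spec hxq2]
      rw [walkSign_append, walkSign_cons]
      ring
    · conv_lhs => rw [← hspec]
      rw [Walk.length_append, hq2, Walk.length_cons]
      conv_lhs => rw [← q2.take_spec hxq2]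
      simp only [Walk.length_append, Walk.length_cons]
      omega
    · simp [Walk.length_cons]

theorem walkSign_closed (hσ : ∀ u v, σ u v = σ v u) (hb : IsBalanced G σ) {u : V}
    (w : G.Walk u u) : walkSign σ w = 1 := by
  suffices H : ∀ n (u : V) (w : G.Walk u u), w.length = n → walkSign σ w = 1 from
    H w.length u w rfl
  intro n
  induction n using Nat.strong_induction_on with
  | _ n ih =>
  intro u w hl
  cases w with
  | nil => exact walkSign_nil σ
  | cons h w' =>
    rename_i v
    -- h : G.Adj u v, w' : G.Walk v u
    by_cases hnd : w'.support.Nodup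
    · by_cases he : s(u, v) ∈ w'.edges
      · exact walkSign_cons_of_edge_mem σ hσ h w' hnd he
      · exact hb u (Walk.cons h w')
          ((Walk.cons_isCycle_iff w' h).mpr ⟨(Walk.isPath_def w').mpr hnd, he⟩)
    · obtain ⟨x, p, l, r, hs, hlen, hpos⟩ := walkSign_split σ w' hnd
      rw [Walk.length_cons] at hl
      have h1 : walkSign σ l = 1 := ih l.length (by omega) x l rfl
      have h2 : walkSign σ (Walk.cons h (p.append r)) = 1 :=
        ih (Walk.cons h (p.append r)).length
          (by rw [Walk.length_cons, Walk.length_append]; omega) u _ rfl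
      rw [walkSign_cons, walkSign_append] at h2
      rw [walkSign_cons, hs, h1]
      calc (if σ u v then (1:ℤ) else -1) * (walkSign σ p * 1 * walkSign σ r)
          = (if σ u v then (1:ℤ) else -1) * (walkSign σ p * walkSign σ r) := by ring
        _ = 1 := h2

end aux

/-- A signed graph is balanced iff its vertex set can be partitioned into two (possibly empty)
sets so that every negative edge joins vertices in different sets and every positive edge
joins vertices in the same set. -/
theorem balanced_iff_bipolar {V : Type*} (G : SimpleGraph V) (σ : V → V → Bool)
    (hσ : ∀ u v, σ u v = σ v u) :
    IsBalanced G σ ↔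
      ∃ X : Set V, ∀ u v, G.Adj u v → ((σ u v = true) ↔ (u ∈ X ↔ v ∈ X)) := by
  constructor
  · intro hb
    classical
    refine ⟨{v | ∃ w : G.Walk (G.connectedComponentMk v).out v, walkSign σ w = 1}, ?_⟩
    intro u v huv
    have hcomp : G.connectedComponentMk v = G.connectedComponentMk u :=
      (ConnectedComponent.sound huv.reachable).symm
    have hr : G.Reachable (G.connectedComponentMk u).out u :=
      (ConnectedComponent.eq).mp (Quot.out_eq _)
    obtain ⟨p⟩ := hr
    have key : ∀ (a : V) (pa : G.Walk (G.connectedComponentMk u).out a),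
        ((∃ w : G.Walk (G.connectedComponentMk u).out a, walkSign σ w = 1) ↔
          walkSign σ pa = 1) := by
      intro a pa
      constructor
      · rintro ⟨w, hw⟩
        have hclosed : walkSign σ (w.append pa.reverse) = 1 :=
          walkSign_closed σ hσ hb _
        rw [walkSign_append, walkSign_reverse σ hσ, hw, one_mul] at hclosed
        rcases walkSign_eq_or σ pa with h1 | h1
        · exact h1
        · rw [h1] at hclosed ⊢; omega
      · intro hpa; exact ⟨pa, hpa⟩
    have hu : (u ∈ {v | ∃ w : G.Walk (G.connectedComponentMk v).out v, walkSign σ w = 1})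
        ↔ walkSign σ p = 1 := key u p
    have hv : (v ∈ {v | ∃ w : G.Walk (G.connectedComponentMk v).out v, walkSign σ w = 1})
        ↔ walkSign σ (p.append (Walk.cons huv Walk.nil)) = 1 := by
      rw [Set.mem_setOf_eq, hcomp]
      exact key v _
    rw [hu, hv, walkSign_append, walkSign_cons, walkSign_nil]
    rcases walkSign_eq_or σ p with hp | hp <;> rw [hp] <;> cases hσuv : σ u v <;> simp
  · rintro ⟨X, hX⟩ u w _
    classical
    have key : ∀ (a b : V) (w : G.Walk a b),
        walkSign σ w = (if a ∈ X then (1:ℤ) else -1) * (if b ∈ X then (1:ℤ) else -1) := by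
      intro a b w
      induction w with
      | nil => rw [walkSign_nil]; split <;> ring
      | cons h p ih =>
        rename_i a c b
        rw [walkSign_cons, ih]
        have hadj := hX _ _ h
        by_cases h1 : a ∈ X <;> by_cases h2 : c ∈ X <;> simp_all
    rw [key u u w]
    split <;> ring
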